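/- Let X be a set of s points in generic position in P^{n_1} × ⋯ × P^{n_k}, let D = min{i ∈ N^k : N(i) > s} (minimal elements under the componentwise partial order), and set T = D ∪ (⋃_{l=1}^k (D + e_l)). Then every minimal generator of I_X has degree lying in T; i.e., I_X is generated by ⊕_{i ∈ T} (I_X)_i. -/

import Mathlib

open MvPolynomial

namespace MultiProjPoints

/-- The variable set of the multigraded coordinate ring of
`ℙ^{n 0} × ⋯ × ℙ^{n (k-1)}`: variables `x_{i,j}` with `i : Fin k`, `0 ≤ j ≤ n i`. -/
abbrev Var (k : ℕ) (n : Fin k → ℕ) := Σ i : Fin k, Fin (n i + 1)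

/-- The `ℕ^k`-grading weight: `deg x_{i,j} = e_i`. -/
def wt (k : ℕ) (n : Fin k → ℕ) : Var k n → (Fin k → ℕ) := fun v => Pi.single v.1 1

/-- The `i`-th standard basis vector of `ℕ^k`. -/
def e {k : ℕ} (l : Fin k) : Fin k → ℕ := Pi.single l 1

variable (K : Type) [Field K]

/-- The graded piece `R_d` of the `ℕ^k`-graded polynomial ring. -/
noncomputable def piece (k : ℕ) (n : Fin k → ℕ) (d : Fin k → ℕ) :
    Submodule K (MvPolynomial (Var k n) K) :=
  weightedHomogeneousSubmodule K (wt k n) d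

/-- `N(d) = ∏ binom (n i + d i) (d i)`, the dimension of `R_d`. -/
def NN (k : ℕ) (n : Fin k → ℕ) (d : Fin k → ℕ) : ℕ := ∏ i, (n i + d i).choose (d i)

/-- A (representative of a) point of `ℙ^{n 0} × ⋯ × ℙ^{n (k-1)}`. -/
def PointRep (k : ℕ) (n : Fin k → ℕ) := (i : Fin k) → Fin (n i + 1) → K

/-- A valid representative: every coordinate block is nonzero. -/
def IsRep {k : ℕ} {n : Fin k → ℕ} (P : PointRep K k n) : Prop := ∀ i, P i ≠ 0

/-- Two representatives define the same point of multi-projective space. -/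
def ProjEq {k : ℕ} {n : Fin k → ℕ} (P Q : PointRep K k n) : Prop :=
  ∀ i, ∃ c : K, c ≠ 0 ∧ P i = c • Q i

/-- A tuple of representatives giving `s` distinct points. -/
def SPoints {k : ℕ} {n : Fin k → ℕ} {s : ℕ} (P : Fin s → PointRep K k n) : Prop :=
  (∀ a, IsRep K (P a)) ∧ ∀ a b, a ≠ b → ¬ ProjEq K (P a) (P b)

/-- The defining ideal `I_X` of the set of points: all polynomials vanishing on
the multi-cone over the points, i.e. the intersection of the point ideals. -/
noncomputable def idealOfPoints {k : ℕ} {n : Fin k → ℕ} {s : ℕ}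
    (P : Fin s → PointRep K k n) : Ideal (MvPolynomial (Var k n) K) :=
  ⨅ (a : Fin s), ⨅ (c : Fin k → K),
    RingHom.ker (eval (fun v : Var k n => c v.1 * P a v.1 v.2))

/-- The degree-`d` piece `I_d` of an ideal, as a `K`-subspace. -/
noncomputable def idealPiece {k : ℕ} {n : Fin k → ℕ}
    (I : Ideal (MvPolynomial (Var k n) K)) (d : Fin k → ℕ) :
    Submodule K (MvPolynomial (Var k n) K) :=
  (Submodule.restrictScalars K I) ⊓ piece K k n d

/-- The multigraded Hilbert function of `X`:
`H_X(d) = dim (R/I_X)_d = dim R_d - dim (I_X)_d`. -/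
noncomputable def hilbert {k : ℕ} {n : Fin k → ℕ} {s : ℕ}
    (P : Fin s → PointRep K k n) (d : Fin k → ℕ) : ℕ :=
  NN k n d - Module.finrank K (idealPiece K (idealOfPoints K P) d)

/-- Generic position: `s` distinct points whose Hilbert function is maximal. -/
def GenericPosition {k : ℕ} {n : Fin k → ℕ} {s : ℕ} (P : Fin s → PointRep K k n) : Prop :=
  SPoints K P ∧ ∀ d : Fin k → ℕ, hilbert K P d = min (NN k n d) s

/-- `R_{e_l}·V`: the span of all products of a variable of degree `e_l`
with an element of `V`. -/
noncomputable def mulSpan {k : ℕ} {n : Fin k → ℕ} (l : Fin k)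
    (V : Submodule K (MvPolynomial (Var k n) K)) :
    Submodule K (MvPolynomial (Var k n) K) :=
  Submodule.span K {g | ∃ (m : Fin (n l + 1)) (f : MvPolynomial (Var k n) K),
    f ∈ V ∧ g = X (⟨l, m⟩ : Var k n) * f}

/-- `D = min { i ∈ ℕ^k | N(i) > s }` (minimal elements for the componentwise order). -/
def Dset (k : ℕ) (n : Fin k → ℕ) (s : ℕ) : Set (Fin k → ℕ) :=
  {i | s < NN k n i ∧ ∀ j : Fin k → ℕ, s < NN k n j → j ≤ i → j = i}

/-- The irrelevant maximal ideal of `R`, generated by all the variables. -/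
noncomputable def irrelevant (k : ℕ) (n : Fin k → ℕ) : Ideal (MvPolynomial (Var k n) K) :=
  Ideal.span (Set.range (X : Var k n → MvPolynomial (Var k n) K))
section Aux

variable {K : Type} [Field K] {k : ℕ} {n : Fin k → ℕ} {s : ℕ}

/-- Evaluation at (the chosen representative of) the `a`-th point. -/
noncomputable def ep (P : Fin s → PointRep K k n) (a : Fin s) :
    MvPolynomial (Var k n) K →+* K :=
  eval (fun v => P a v.1 v.2)

lemma ep_X (P : Fin s → PointRep K k n) (a : Fin s) (v : Var k n) :
    ep P a (X v) = P a v.1 v.2 := by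
  simp [ep]

lemma ep_smul (P : Fin s → PointRep K k n) (a : Fin s) (r : K)
    (f : MvPolynomial (Var k n) K) : ep P a (r • f) = r * ep P a f := by
  rw [smul_eq_C_mul, map_mul]
  simp [ep]

lemma weight_wt_apply (α : Var k n →₀ ℕ) (i : Fin k) :
    Finsupp.weight (wt k n) α i = ∑ j, α ⟨i, j⟩ := by
  classical
  have h1 : Finsupp.weight (wt k n) α = ∑ v : Var k n, α v • wt k n v := by
    rw [Finsupp.weight_apply, Finsupp.sum_fintype]
    intro v; simp
  rw [h1]
  rw [Finset.sum_apply]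
  have h2 : ∀ v : Var k n, (α v • wt k n v) i = if v.1 = i then α v else 0 := by
    intro v
    simp only [Pi.smul_apply, wt, smul_eq_mul]
    rcases eq_or_ne v.1 i with h | h
    · rw [if_pos h, ← h, Pi.single_eq_same, mul_one]
    · rw [if_neg h, Pi.single_eq_of_ne (Ne.symm h), mul_zero]
  calc (∑ v : Var k n, (α v • wt k n v) i)
      = ∑ v : Var k n, if v.1 = i then α v else 0 := by
        exact Finset.sum_congr rfl (fun v _ => h2 v)
    _ = ∑ i' : Fin k, ∑ j, if i' = i then α ⟨i', j⟩ else 0 := by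
        rw [← Finset.univ_sigma_univ, Finset.sum_sigma]
    _ = ∑ j, α ⟨i, j⟩ := by
        rw [Finset.sum_eq_single i]
        · simp
        · intro b _ hb; simp [hb]
        · intro h; exact absurd (Finset.mem_univ i) h

/-- Scaling a weighted-homogeneous polynomial's variables blockwise. -/
lemma eval_scale {d : Fin k → ℕ} {f : MvPolynomial (Var k n) K}
    (hf : f.IsWeightedHomogeneous (wt k n) d) (c : Fin k → K) (x : Var k n → K) :
    eval (fun v => c v.1 * x v) f = (∏ i, c i ^ d i) * eval x f := by
  classical
  rw [eval_eq', eval_eq', Finset.mul_sum]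
  apply Finset.sum_congr rfl
  intro α hα
  have hw : Finsupp.weight (wt k n) α = d := hf (MvPolynomial.mem_support_iff.mp hα)
  have h1 : (∏ v : Var k n, (c v.1 * x v) ^ α v)
      = (∏ v : Var k n, c v.1 ^ α v) * ∏ v : Var k n, x v ^ α v := by
    rw [← Finset.prod_mul_distrib]
    exact Finset.prod_congr rfl (fun v _ => mul_pow _ _ _)
  have h2 : (∏ v : Var k n, c v.1 ^ α v) = ∏ i, c i ^ d i := by
    rw [← Finset.univ_sigma_univ, Finset.prod_sigma]
    apply Finset.prod_congr rfl
    intro i _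
    have he : ∀ j : Fin (n i + 1), c (⟨i, j⟩ : Var k n).fst ^ α ⟨i, j⟩ = c i ^ α ⟨i, j⟩ :=
      fun _ => rfl
    rw [Finset.prod_congr rfl (fun j _ => he j), Finset.prod_pow_eq_pow_sum]
    congr 1
    rw [← hw, weight_wt_apply]
  rw [h1, h2]; ring

lemma mem_ideal_iff {d : Fin k → ℕ} {P : Fin s → PointRep K k n}
    {f : MvPolynomial (Var k n) K} (hf : f ∈ piece K k n d) :
    f ∈ idealOfPoints K P ↔ ∀ a, ep P a f = 0 := by
  simp only [idealOfPoints, Ideal.mem_iInf, RingHom.mem_ker]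
  constructor
  · intro h a
    have := h a (fun _ => 1)
    simpa only [one_mul, ep] using this
  · intro h a c
    have : eval (fun v : Var k n => c v.1 * P a v.1 v.2) f
        = (∏ i, c i ^ d i) * ep P a f := eval_scale hf c _
    rw [this, h a, mul_zero]

end Aux
section Aux2

variable {K : Type} [Field K] {k : ℕ} {n : Fin k → ℕ} {s : ℕ}

lemma piece_le_restrict (d : Fin k → ℕ) :
    piece K k n d ≤ MvPolynomial.restrictTotalDegree (Var k n) K (∑ i, d i) := by
  intro f hf
  rw [MvPolynomial.mem_restrictTotalDegree, MvPolynomial.totalDegree]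
  apply Finset.sup_le
  intro α hα
  have hw := hf (MvPolynomial.mem_support_iff.mp hα)
  have : (α.sum fun _ e => e) = ∑ i, d i := by
    rw [Finsupp.sum_fintype _ _ (fun _ => rfl)]
    rw [← Finset.univ_sigma_univ, Finset.sum_sigma]
    exact Finset.sum_congr rfl fun i _ => by
      rw [← weight_wt_apply (n := n) α i, hw]
  exact le_of_eq this

instance pieceFD (d : Fin k → ℕ) : FiniteDimensional K (piece K k n d) :=
  Submodule.finiteDimensional_of_le (piece_le_restrict d)

instance idealPieceFD (I : Ideal (MvPolynomial (Var k n) K)) (d : Fin k → ℕ) :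
    FiniteDimensional K (idealPiece K I d) :=
  Submodule.finiteDimensional_of_le (inf_le_right : idealPiece K I d ≤ piece K k n d)

/-- stars and bars: block exponent vectors of given degree. -/
noncomputable def blockEquiv (m t : ℕ) :
    {g : Fin m →₀ ℕ // (g.sum fun _ e => e) = t} ≃ Sym (Fin m) t :=
  Equiv.subtypeEquiv Finsupp.orderIsoMultiset.toEquiv (by
    intro g
    show (g.sum fun _ e => e) = t ↔ Multiset.card (Finsupp.orderIsoMultiset g) = t
    rw [Finsupp.coe_orderIsoMultiset, Finsupp.card_toMultiset]
    rfl)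

noncomputable instance blockFT (m t : ℕ) :
    Fintype {g : Fin m →₀ ℕ // (g.sum fun _ e => e) = t} :=
  Fintype.ofEquiv _ (blockEquiv m t).symm

lemma blockCard (m t : ℕ) :
    Fintype.card {g : Fin m →₀ ℕ // (g.sum fun _ e => e) = t}
      = (m + t - 1).choose t := by
  rw [Fintype.card_congr (blockEquiv m t), Sym.card_sym_eq_choose, Fintype.card_fin]

lemma comp_sum (α : Var k n →₀ ℕ) (i : Fin k) :
    ((Finsupp.sigmaFinsuppEquivPiFinsupp α) i).sum (fun _ e => e) = ∑ j, α ⟨i, j⟩ := by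
  rw [Finsupp.sum_fintype _ _ (fun _ => rfl)]
  exact Finset.sum_congr rfl fun j _ => by
    rw [Finsupp.sigmaFinsuppEquivPiFinsupp_apply]

noncomputable def degEquiv (d : Fin k → ℕ) :
    {α : Var k n →₀ ℕ // Finsupp.weight (wt k n) α = d}
      ≃ Π i : Fin k, {g : Fin (n i + 1) →₀ ℕ // (g.sum fun _ e => e) = d i} :=
  (Equiv.subtypeEquiv (Finsupp.sigmaFinsuppEquivPiFinsupp) (by
    intro α
    rw [funext_iff]
    apply forall_congr'
    intro i
    rw [comp_sum, weight_wt_apply])).trans (Equiv.subtypePiEquivPi)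

noncomputable instance degFT (d : Fin k → ℕ) :
    Fintype {α : Var k n →₀ ℕ // Finsupp.weight (wt k n) α = d} :=
  Fintype.ofEquiv _ (degEquiv d).symm

lemma degCard (d : Fin k → ℕ) :
    Fintype.card {α : Var k n →₀ ℕ // Finsupp.weight (wt k n) α = d} = NN k n d := by
  rw [Fintype.card_congr (degEquiv d), Fintype.card_pi]
  unfold NN
  apply Finset.prod_congr rfl
  intro i _
  rw [blockCard]
  congr 1
  omega

lemma NN_le_finrank_piece (d : Fin k → ℕ) :
    NN k n d ≤ Module.finrank K (piece K k n d) := by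
  classical
  rw [← degCard (n := n) d]
  set V := piece K k n d
  have hmem : ∀ β : {α : Var k n →₀ ℕ // Finsupp.weight (wt k n) α = d},
      (monomial β.1 (1 : K)) ∈ V := fun β =>
    isWeightedHomogeneous_monomial _ _ _ β.2
  set b : {α : Var k n →₀ ℕ // Finsupp.weight (wt k n) α = d} → V :=
    fun β => ⟨monomial β.1 1, hmem β⟩ with hb
  have hli : LinearIndependent K b := by
    apply LinearIndependent.of_comp V.subtype
    have : (V.subtype ∘ b) = (fun β : {α : Var k n →₀ ℕ //
        Finsupp.weight (wt k n) α = d} => (monomial β.1 (1 : K))) := rfl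
    rw [this]
    have hbase := (basisMonomials (Var k n) K).linearIndependent
    rw [coe_basisMonomials] at hbase
    exact hbase.comp _ Subtype.val_injective
  exact hli.fintype_card_le_finrank

lemma idealPiece_eq_bot {P : Fin s → PointRep K k n} (hgen : GenericPosition K P)
    {d : Fin k → ℕ} (h : NN k n d ≤ s) :
    idealPiece K (idealOfPoints K P) d = ⊥ := by
  have hH := hgen.2 d
  rw [hilbert, min_eq_left h] at hH
  have hNN : 0 < NN k n d := by
    apply Finset.prod_pos
    intro i _
    exact Nat.choose_pos (Nat.le_add_left _ _)
  have : Module.finrank K (idealPiece K (idealOfPoints K P) d) = 0 := by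
    by_contra hne
    have h1 : 0 < Module.finrank K (idealPiece K (idealOfPoints K P) d) :=
      Nat.pos_of_ne_zero hne
    omega
  rwa [Submodule.finrank_eq_zero] at this

lemma finrank_idealPiece {P : Fin s → PointRep K k n} (hgen : GenericPosition K P)
    {d : Fin k → ℕ} (h : s ≤ NN k n d) (hs : 0 < s) :
    Module.finrank K (idealPiece K (idealOfPoints K P) d) = NN k n d - s := by
  have hH := hgen.2 d
  rw [hilbert, min_eq_right h] at hH
  omega

end Aux2
section Aux3

variable {K : Type} [Field K] {k : ℕ} {n : Fin k → ℕ} {s : ℕ}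

/-- Simultaneous evaluation at all the points, as a linear map. -/
noncomputable def evalPoints (P : Fin s → PointRep K k n) :
    MvPolynomial (Var k n) K →ₗ[K] (Fin s → K) where
  toFun f := fun a => ep P a f
  map_add' f g := funext fun a => by exact map_add (ep P a) f g
  map_smul' r f := funext fun a => by
    simp only [RingHom.id_apply, Pi.smul_apply, smul_eq_mul]
    exact ep_smul P a r f

set_option synthInstance.maxHeartbeats 1000000 in
lemma exists_separators {P : Fin s → PointRep K k n} (hgen : GenericPosition K P)
    {c : Fin k → ℕ} (hc : s ≤ NN k n c) :
    ∃ g : Fin s → MvPolynomial (Var k n) K, (∀ b, g b ∈ piece K k n c) ∧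
      ∀ a b, ep P a (g b) = if a = b then 1 else 0 := by
  classical
  rcases Nat.eq_zero_or_pos s with hs | hs
  · subst hs
    exact ⟨fun b => Fin.elim0 b, fun b => Fin.elim0 b, fun a => Fin.elim0 a⟩
  set I := idealOfPoints K P
  set V := piece K k n c
  set φ : V →ₗ[K] (Fin s → K) := (evalPoints P).domRestrict V with hφ
  have hkerle : Submodule.comap V.subtype (idealPiece K I c) = LinearMap.ker φ := by
    ext x
    simp only [Submodule.mem_comap, LinearMap.mem_ker, Submodule.coe_subtype,
      idealPiece, Submodule.mem_inf, Submodule.restrictScalars_mem]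
    constructor
    · rintro ⟨hI, -⟩
      funext a
      exact (mem_ideal_iff x.2).mp hI a
    · intro hx
      refine ⟨(mem_ideal_iff x.2).mpr fun a => ?_, x.2⟩
      exact congrFun hx a
  have hkerrank : Module.finrank K (LinearMap.ker φ) = NN k n c - s := by
    rw [← hkerle]
    rw [LinearEquiv.finrank_eq
      (Submodule.comapSubtypeEquivOfLe (p := idealPiece K I c) (q := V) inf_le_right)]
    exact finrank_idealPiece hgen hc hs
  have hrn := LinearMap.finrank_range_add_finrank_ker φ
  have hVrank : NN k n c ≤ Module.finrank K V := NN_le_finrank_piece c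
  have hranklow : s ≤ Module.finrank K (LinearMap.range φ) := by omega
  have hrankhigh : Module.finrank K (LinearMap.range φ) ≤ s := by
    have := Submodule.finrank_le (LinearMap.range φ)
    rwa [Module.finrank_pi, Fintype.card_fin] at this
  have hrange : LinearMap.range φ = ⊤ := by
    apply Submodule.eq_top_of_finrank_eq
    rw [Module.finrank_pi, Fintype.card_fin]
    omega
  have hsurj : ∀ y : Fin s → K, ∃ x : V, φ x = y := by
    intro y
    have : y ∈ LinearMap.range φ := by rw [hrange]; exact Submodule.mem_top
    exact this
  choose gg hgg using hsurj
  refine ⟨fun b => (gg (Pi.single b 1) : MvPolynomial (Var k n) K),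
    fun b => (gg (Pi.single b 1)).2, fun a b => ?_⟩
  have := congrFun (hgg (Pi.single b 1)) a
  rw [hφ] at this
  simp only [LinearMap.domRestrict_apply] at this
  rw [show ((evalPoints P) (gg (Pi.single b 1) : MvPolynomial (Var k n) K)) a
      = ep P a (gg (Pi.single b 1) : MvPolynomial (Var k n) K) from rfl] at this
  rw [this, Pi.single_apply]
end Aux3
section Aux4

variable {K : Type} [Field K] {k : ℕ} {n : Fin k → ℕ} {s : ℕ}

lemma piece_mul {A B : Fin k → ℕ} {f g : MvPolynomial (Var k n) K}
    (hf : f ∈ piece K k n A) (hg : g ∈ piece K k n B) :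
    f * g ∈ piece K k n (A + B) :=
  IsWeightedHomogeneous.mul hf hg

lemma X_mem_piece (l : Fin k) (m : Fin (n l + 1)) :
    (X (⟨l, m⟩ : Var k n) : MvPolynomial (Var k n) K) ∈ piece K k n (e l) :=
  isWeightedHomogeneous_X K (wt k n) ⟨l, m⟩

lemma decompose {c : Fin k → ℕ} (l : Fin k) {f : MvPolynomial (Var k n) K}
    (hf : f ∈ piece K k n (c + e l)) :
    ∃ v : Fin (n l + 1) → MvPolynomial (Var k n) K,
      (∀ m, v m ∈ piece K k n c) ∧ f = ∑ m, X (⟨l, m⟩ : Var k n) * v m := by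
  classical
  set Φ : (Fin (n l + 1) → piece K k n c) →ₗ[K] MvPolynomial (Var k n) K :=
    { toFun := fun v => ∑ m, X (⟨l, m⟩ : Var k n) * (v m : MvPolynomial (Var k n) K)
      map_add' := by
        intro v w
        rw [← Finset.sum_add_distrib]
        exact Finset.sum_congr rfl fun m _ => by
          simp [Pi.add_apply, mul_add]
      map_smul' := by
        intro r v
        rw [RingHom.id_apply]
        show (∑ m, X (⟨l, m⟩ : Var k n) * (((r • v) m : piece K k n c) : MvPolynomial (Var k n) K))
            = r • ∑ m, X (⟨l, m⟩ : Var k n) * ((v m : piece K k n c) : MvPolynomial (Var k n) K)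
        rw [Finset.smul_sum]
        exact Finset.sum_congr rfl fun m _ => by
          simp [Pi.smul_apply, mul_smul_comm] } with hΦ
  have hrange : f ∈ LinearMap.range Φ := by
    rw [← MvPolynomial.support_sum_monomial_coeff f]
    apply Submodule.sum_mem
    intro α hα
    have hw : Finsupp.weight (wt k n) α = c + e l :=
      hf (MvPolynomial.mem_support_iff.mp hα)
    have hsum : (∑ j, α ⟨l, j⟩) = c l + 1 := by
      rw [← weight_wt_apply (n := n) α l, hw]
      simp [e, Pi.single_eq_same]
    have hex : ∃ j, α ⟨l, j⟩ ≠ 0 := by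
      by_contra hno
      push_neg at hno
      rw [Finset.sum_congr rfl (fun j _ => hno j)] at hsum
      simp at hsum
    obtain ⟨j, hj⟩ := hex
    set β := α - Finsupp.single (⟨l, j⟩ : Var k n) 1 with hβdef
    have hle : Finsupp.single (⟨l, j⟩ : Var k n) 1 ≤ α := by
      rw [Finsupp.single_le_iff]
      omega
    have hβ : β + Finsupp.single (⟨l, j⟩ : Var k n) 1 = α :=
      tsub_add_cancel_of_le hle
    have hwβ : Finsupp.weight (wt k n) β = c := by
      have h1 : Finsupp.weight (wt k n) β + Finsupp.weight (wt k n)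
          (Finsupp.single (⟨l, j⟩ : Var k n) 1) = c + e l := by
        rw [← map_add, hβ, hw]
      have h2 : Finsupp.weight (wt k n) (Finsupp.single (⟨l, j⟩ : Var k n) 1)
          = e l := by
        rw [Finsupp.weight_apply, Finsupp.sum_single_index]
        · exact one_smul _ _
        · exact zero_smul _ _
      rw [h2] at h1
      exact add_right_cancel h1
    have hmono : (monomial α) (MvPolynomial.coeff α f)
        = X (⟨l, j⟩ : Var k n) * (monomial β) (MvPolynomial.coeff α f) := by
      rw [MvPolynomial.X, MvPolynomial.monomial_mul, one_mul, ← hβ, add_comm]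
    rw [hmono]
    set xβ : piece K k n c := ⟨(monomial β) (MvPolynomial.coeff α f),
      isWeightedHomogeneous_monomial _ _ _ hwβ⟩ with hxβ
    refine ⟨Pi.single j xβ, ?_⟩
    rw [hΦ]
    simp only [LinearMap.coe_mk, AddHom.coe_mk]
    have hterm : ∀ m : Fin (n l + 1),
        X (⟨l, m⟩ : Var k n) * (((Pi.single j xβ : ∀ _ : Fin (n l + 1), piece K k n c) m) : MvPolynomial (Var k n) K)
        = if m = j then X (⟨l, m⟩ : Var k n) * (xβ : MvPolynomial (Var k n) K) else 0 := by
      intro m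
      rcases eq_or_ne m j with h | h
      · subst h
        rw [if_pos rfl, Pi.single_eq_same]
      · rw [if_neg h, Pi.single_eq_of_ne h]
        simp
    rw [Finset.sum_congr rfl (fun m _ => hterm m), Finset.sum_ite_eq' Finset.univ j]
    rw [if_pos (Finset.mem_univ j)]
  obtain ⟨v, hv⟩ := hrange
  exact ⟨fun m => (v m : MvPolynomial (Var k n) K), fun m => (v m).2, hv.symm⟩

end Aux4
section Aux5

variable {K : Type} [Field K] {k : ℕ} {n : Fin k → ℕ} {s : ℕ}

lemma mem_idealPiece_of {I : Ideal (MvPolynomial (Var k n) K)} {d : Fin k → ℕ}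
    {f : MvPolynomial (Var k n) K} (hI : f ∈ I) (hP : f ∈ piece K k n d) :
    f ∈ idealPiece K I d :=
  Submodule.mem_inf.mpr ⟨hI, hP⟩

lemma key {P : Fin s → PointRep K k n} (hgen : GenericPosition K P)
    (J : Ideal (MvPolynomial (Var k n) K)) {c : Fin k → ℕ} (l l' : Fin k)
    (hJ1 : (idealPiece K (idealOfPoints K P) (c + e l') : Set (MvPolynomial (Var k n) K)) ⊆ J)
    (hJ2 : (idealPiece K (idealOfPoints K P) (c + e l) : Set (MvPolynomial (Var k n) K)) ⊆ J)
    (h1 : s ≤ NN k n (c + e l')) (h2 : s ≤ NN k n c) :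
    (idealPiece K (idealOfPoints K P) (c + e l' + e l) : Set (MvPolynomial (Var k n) K)) ⊆ J := by
  classical
  intro f hf
  rw [SetLike.mem_coe] at hf
  obtain ⟨hfI, hfP⟩ := Submodule.mem_inf.mp hf
  rw [Submodule.restrictScalars_mem] at hfI
  obtain ⟨g, hgP, hgval⟩ := exists_separators hgen h1
  obtain ⟨h, hhP, hhval⟩ := exists_separators hgen h2
  obtain ⟨v, hvP, hfv⟩ := decompose l hfP
  set u : Fin (n l + 1) → MvPolynomial (Var k n) K :=
    fun m => v m - ∑ a, ep P a (v m) • g a with hu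
  have hvu : ∀ m, v m = u m + ∑ a, ep P a (v m) • g a := fun m => by
    rw [hu]; ring
  have huP : ∀ m, u m ∈ piece K k n (c + e l') := fun m =>
    sub_mem (hvP m) (Submodule.sum_mem _ fun a _ =>
      Submodule.smul_mem _ _ (hgP a))
  have hepsep : ∀ (b : Fin s) (t : Fin s → K),
      ep P b (∑ a, t a • g a) = t b := by
    intro b t
    rw [map_sum]
    have : ∀ a : Fin s, ep P b (t a • g a) = if b = a then t a else 0 := by
      intro a
      rw [ep_smul, hgval b a]
      rcases eq_or_ne b a with hba | hba
      · rw [if_pos hba, if_pos hba, mul_one]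
      · rw [if_neg hba, if_neg hba, mul_zero]
    rw [Finset.sum_congr rfl fun a _ => this a, Finset.sum_ite_eq Finset.univ b]
    rw [if_pos (Finset.mem_univ b)]
  have huep : ∀ b m, ep P b (u m) = 0 := by
    intro b m
    rw [hu]
    simp only [map_sub]
    rw [hepsep b (fun a => ep P a (v m))]
    ring
  have huI : ∀ m, u m ∈ idealOfPoints K P := fun m =>
    (mem_ideal_iff (huP m)).mpr fun b => huep b m
  set L : Fin s → MvPolynomial (Var k n) K :=
    fun a => ∑ m, ep P a (v m) • X (⟨l, m⟩ : Var k n) with hL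
  have hLP : ∀ a, L a ∈ piece K k n (e l) := fun a =>
    Submodule.sum_mem _ fun m _ => Submodule.smul_mem _ _ (X_mem_piece l m)
  have hepf : ∀ b, ep P b f = ∑ m, P b l m * ep P b (v m) := by
    intro b
    rw [hfv, map_sum]
    exact Finset.sum_congr rfl fun m _ => by rw [map_mul, ep_X]
  have hLa : ∀ a, ep P a (L a) = 0 := by
    intro a
    have h0 : ep P a f = 0 := (mem_ideal_iff hfP).mp hfI a
    rw [hL]
    simp only [map_sum, ep_smul, ep_X]
    rw [← h0, hepf a]
    exact Finset.sum_congr rfl fun m _ => mul_comm _ _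
  have hsplit : f = (∑ m, X (⟨l, m⟩ : Var k n) * u m) + ∑ a, L a * g a := by
    calc f = ∑ m, X (⟨l, m⟩ : Var k n) * v m := hfv
      _ = ∑ m, (X (⟨l, m⟩ : Var k n) * u m
            + ∑ a, ep P a (v m) • (X (⟨l, m⟩ : Var k n) * g a)) := by
          refine Finset.sum_congr rfl fun m _ => ?_
          have hx : X (⟨l, m⟩ : Var k n) * v m = X (⟨l, m⟩ : Var k n) * u m
              + X (⟨l, m⟩ : Var k n) * ∑ a, ep P a (v m) • g a := by
            rw [← mul_add, ← hvu m]
          rw [hx, Finset.mul_sum]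
          congr 1
          exact Finset.sum_congr rfl fun a _ => mul_smul_comm _ _ _
      _ = (∑ m, X (⟨l, m⟩ : Var k n) * u m)
            + ∑ m, ∑ a, ep P a (v m) • (X (⟨l, m⟩ : Var k n) * g a) :=
          Finset.sum_add_distrib
      _ = (∑ m, X (⟨l, m⟩ : Var k n) * u m)
            + ∑ a, ∑ m, ep P a (v m) • (X (⟨l, m⟩ : Var k n) * g a) := by
          rw [Finset.sum_comm]
      _ = (∑ m, X (⟨l, m⟩ : Var k n) * u m) + ∑ a, L a * g a := by
          congr 1
          refine Finset.sum_congr rfl fun a _ => ?_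
          rw [hL, Finset.sum_mul]
          exact Finset.sum_congr rfl fun m _ => (smul_mul_assoc _ _ _).symm
  have hterm1 : (∑ m, X (⟨l, m⟩ : Var k n) * u m) ∈ J := by
    apply Ideal.sum_mem
    intro m _
    exact Ideal.mul_mem_left J _ (hJ1 (mem_idealPiece_of (huI m) (huP m)))
  have hterm2 : ∀ a, L a * g a ∈ J := by
    intro a
    obtain ⟨v', hv'P, hgd⟩ := decompose l' (hgP a)
    set w : Fin (n l' + 1) → MvPolynomial (Var k n) K :=
      fun m' => v' m' - ∑ b, ep P b (v' m') • h b with hw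
    have hv'w : ∀ m', v' m' = w m' + ∑ b, ep P b (v' m') • h b := fun m' => by
      rw [hw]; ring
    have hwP : ∀ m', w m' ∈ piece K k n c := fun m' =>
      sub_mem (hv'P m') (Submodule.sum_mem _ fun b _ =>
        Submodule.smul_mem _ _ (hhP b))
    have hepsep' : ∀ (b : Fin s) (t : Fin s → K),
        ep P b (∑ a', t a' • h a') = t b := by
      intro b t
      rw [map_sum]
      have : ∀ a' : Fin s, ep P b (t a' • h a') = if b = a' then t a' else 0 := by
        intro a'
        rw [ep_smul, hhval b a']
        rcases eq_or_ne b a' with hba | hba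
        · rw [if_pos hba, if_pos hba, mul_one]
        · rw [if_neg hba, if_neg hba, mul_zero]
      rw [Finset.sum_congr rfl fun a' _ => this a', Finset.sum_ite_eq Finset.univ b]
      rw [if_pos (Finset.mem_univ b)]
    have hwep : ∀ b m', ep P b (w m') = 0 := by
      intro b m'
      rw [hw]
      simp only [map_sub]
      rw [hepsep' b (fun b' => ep P b' (v' m'))]
      ring
    have hwI : ∀ m', w m' ∈ idealOfPoints K P := fun m' =>
      (mem_ideal_iff (hwP m')).mpr fun b => hwep b m'
    set M : Fin s → MvPolynomial (Var k n) K :=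
      fun b => ∑ m', ep P b (v' m') • X (⟨l', m'⟩ : Var k n) with hM
    have hMP : ∀ b, M b ∈ piece K k n (e l') := fun b =>
      Submodule.sum_mem _ fun m' _ => Submodule.smul_mem _ _ (X_mem_piece l' m')
    have hepg : ∀ b, ep P b (g a) = ∑ m', P b l' m' * ep P b (v' m') := by
      intro b
      rw [hgd, map_sum]
      exact Finset.sum_congr rfl fun m' _ => by rw [map_mul, ep_X]
    have hMb : ∀ b, ep P b (M b) = if b = a then 1 else 0 := by
      intro b
      rw [← hgval b a, hM]
      simp only [map_sum, ep_smul, ep_X]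
      rw [hepg b]
      exact Finset.sum_congr rfl fun m' _ => mul_comm _ _
    have hgsplit : g a = (∑ m', X (⟨l', m'⟩ : Var k n) * w m') + ∑ b, M b * h b := by
      calc g a = ∑ m', X (⟨l', m'⟩ : Var k n) * v' m' := hgd
        _ = ∑ m', (X (⟨l', m'⟩ : Var k n) * w m'
              + ∑ b, ep P b (v' m') • (X (⟨l', m'⟩ : Var k n) * h b)) := by
            refine Finset.sum_congr rfl fun m' _ => ?_
            have hx : X (⟨l', m'⟩ : Var k n) * v' m' = X (⟨l', m'⟩ : Var k n) * w m'
                + X (⟨l', m'⟩ : Var k n) * ∑ b, ep P b (v' m') • h b := by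
              rw [← mul_add, ← hv'w m']
            rw [hx, Finset.mul_sum]
            congr 1
            exact Finset.sum_congr rfl fun b _ => mul_smul_comm _ _ _
        _ = (∑ m', X (⟨l', m'⟩ : Var k n) * w m')
              + ∑ m', ∑ b, ep P b (v' m') • (X (⟨l', m'⟩ : Var k n) * h b) :=
            Finset.sum_add_distrib
        _ = (∑ m', X (⟨l', m'⟩ : Var k n) * w m')
              + ∑ b, ∑ m', ep P b (v' m') • (X (⟨l', m'⟩ : Var k n) * h b) := by
            rw [Finset.sum_comm]
        _ = (∑ m', X (⟨l', m'⟩ : Var k n) * w m') + ∑ b, M b * h b := by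
            congr 1
            refine Finset.sum_congr rfl fun b _ => ?_
            rw [hM, Finset.sum_mul]
            exact Finset.sum_congr rfl fun m' _ => (smul_mul_assoc _ _ _).symm
    have hLw : ∀ m', L a * w m' ∈ idealPiece K (idealOfPoints K P) (c + e l) := by
      intro m'
      apply mem_idealPiece_of
      · exact Ideal.mul_mem_left _ _ (hwI m')
      · have := piece_mul (hLP a) (hwP m')
        rwa [add_comm (e l) c] at this
    have hLhPc : L a * h a ∈ piece K k n (c + e l) := by
      have := piece_mul (hLP a) (hhP a)
      rwa [add_comm (e l) c] at this
    have hLh : L a * h a ∈ idealPiece K (idealOfPoints K P) (c + e l) := by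
      apply mem_idealPiece_of _ hLhPc
      apply (mem_ideal_iff hLhPc).mpr
      intro b
      rw [map_mul]
      rcases eq_or_ne b a with hba | hba
      · rw [hba, hLa a, zero_mul]
      · rw [hhval b a, if_neg hba, mul_zero]
    have hMh : ∀ b, b ≠ a → M b * h b ∈ idealPiece K (idealOfPoints K P) (c + e l') := by
      intro b hba
      have hMhPc : M b * h b ∈ piece K k n (c + e l') := by
        have := piece_mul (hMP b) (hhP b)
        rwa [add_comm (e l') c] at this
      apply mem_idealPiece_of _ hMhPc
      apply (mem_ideal_iff hMhPc).mpr
      intro b''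
      rw [map_mul]
      rcases eq_or_ne b'' b with hbb | hbb
      · rw [hbb, hMb b, if_neg hba, zero_mul]
      · rw [hhval b'' b, if_neg hbb, mul_zero]
    have : L a * g a = (∑ m', X (⟨l', m'⟩ : Var k n) * (L a * w m'))
        + ∑ b, L a * (M b * h b) := by
      rw [hgsplit, mul_add, Finset.mul_sum, Finset.mul_sum]
      refine congrArg₂ (· + ·) ?_ rfl
      exact Finset.sum_congr rfl fun m' _ => by ring
    rw [this]
    apply Ideal.add_mem
    · apply Ideal.sum_mem
      intro m' _
      exact Ideal.mul_mem_left J _ (hJ2 (hLw m'))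
    · apply Ideal.sum_mem
      intro b _
      rcases eq_or_ne b a with hba | hba
      · rw [hba]
        have hswap : L a * (M a * h a) = M a * (L a * h a) := by ring
        rw [hswap]
        exact Ideal.mul_mem_left J _ (hJ2 hLh)
      · exact Ideal.mul_mem_left J _ (hJ1 (hMh b hba))
  rw [hsplit]
  exact Ideal.add_mem J hterm1 (Ideal.sum_mem J fun a _ => hterm2 a)

end Aux5
section Aux6

variable {K : Type} [Field K] {k : ℕ} {n : Fin k → ℕ} {s : ℕ}

lemma choose_diag_mono (m : ℕ) : ∀ {a b : ℕ}, a ≤ b →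
    (m + a).choose a ≤ (m + b).choose b := by
  intro a b hab
  induction b, hab using Nat.le_induction with
  | base => exact le_refl _
  | succ b hb ih =>
    refine le_trans ih ?_
    have : m + (b + 1) = (m + b) + 1 := by omega
    rw [this, Nat.choose_succ_succ]
    exact Nat.le_add_right _ _

lemma NN_mono {d d' : Fin k → ℕ} (h : d ≤ d') : NN k n d ≤ NN k n d' := by
  apply Finset.prod_le_prod'
  intro i _
  exact choose_diag_mono (n i) (h i)

lemma hel (l i : Fin k) : e l i = if i = l then 1 else 0 := by
  rw [e, Pi.single_apply]

lemma sum_e (l : Fin k) : ∑ i, e l i = 1 := by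
  rw [Finset.sum_congr rfl fun i _ => hel l i, Finset.sum_ite_eq' Finset.univ l]
  rw [if_pos (Finset.mem_univ l)]

lemma exists_Dset : ∀ (t : ℕ) (d : Fin k → ℕ), (∑ i, d i) ≤ t → s < NN k n d →
    ∃ D0 ∈ Dset k n s, D0 ≤ d := by
  intro t
  induction t with
  | zero =>
    intro d hd hNN
    refine ⟨d, ⟨hNN, fun j _ hj => ?_⟩, le_refl d⟩
    have hd0 : ∀ i, d i = 0 := by
      intro i
      have h1 : d i ≤ ∑ i', d i' := Finset.single_le_sum (fun _ _ => Nat.zero_le _)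
        (Finset.mem_univ i)
      omega
    funext i
    have h2 : j i ≤ d i := hj i
    have h3 : d i = 0 := hd0 i
    omega
  | succ t ih =>
    intro d hd hNN
    by_cases hmem : d ∈ Dset k n s
    · exact ⟨d, hmem, le_refl d⟩
    · have : ∃ j : Fin k → ℕ, s < NN k n j ∧ j ≤ d ∧ j ≠ d := by
        by_contra hno
        push_neg at hno
        exact hmem ⟨hNN, fun j h1 h2 => hno j h1 h2⟩
      obtain ⟨j, hj1, hj2, hj3⟩ := this
      have hlt : ∑ i, j i < ∑ i, d i := by
        have hex : ∃ i, j i ≠ d i := by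
          by_contra hno
          push_neg at hno
          exact hj3 (funext hno)
        obtain ⟨i0, hi0⟩ := hex
        apply Finset.sum_lt_sum (fun i _ => hj2 i)
        exact ⟨i0, Finset.mem_univ i0, lt_of_le_of_ne (hj2 i0) hi0⟩
      obtain ⟨D0, hD0, hle⟩ := ih j (by omega) hj1
      exact ⟨D0, hD0, le_trans hle hj2⟩

lemma pieces_le {P : Fin s → PointRep K k n} (hgen : GenericPosition K P)
    (J : Ideal (MvPolynomial (Var k n) K))
    (hgens : ∀ i : Fin k → ℕ,
      (i ∈ Dset k n s ∨ ∃ (l : Fin k) (D0 : Fin k → ℕ), D0 ∈ Dset k n s ∧ i = D0 + e l) →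
      (idealPiece K (idealOfPoints K P) i : Set (MvPolynomial (Var k n) K)) ⊆ J) :
    ∀ (t : ℕ) (d : Fin k → ℕ), (∑ i, d i) ≤ t →
      (idealPiece K (idealOfPoints K P) d : Set (MvPolynomial (Var k n) K)) ⊆ J := by
  intro t
  induction t with
  | zero =>
    intro d hd
    rcases le_or_gt (NN k n d) s with hNs | hNs
    · rw [idealPiece_eq_bot hgen hNs]
      intro x hx
      rw [SetLike.mem_coe, Submodule.mem_bot] at hx
      rw [hx, SetLike.mem_coe]
      exact J.zero_mem
    · obtain ⟨D0, hD0, hle⟩ := exists_Dset 0 d hd hNs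
      have hdD : d = D0 := by
        funext i
        have h1 : d i ≤ ∑ i', d i' := Finset.single_le_sum (fun _ _ => Nat.zero_le _)
          (Finset.mem_univ i)
        have h2 : D0 i ≤ d i := hle i
        omega
      rw [hdD]
      exact hgens D0 (Or.inl hD0)
  | succ t ih =>
    intro d hd
    rcases le_or_gt (NN k n d) s with hNs | hNs
    · rw [idealPiece_eq_bot hgen hNs]
      intro x hx
      rw [SetLike.mem_coe, Submodule.mem_bot] at hx
      rw [hx, SetLike.mem_coe]
      exact J.zero_mem
    · obtain ⟨D0, hD0, hle⟩ := exists_Dset (∑ i, d i) d (le_refl _) hNs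
      obtain ⟨uu, huu⟩ : ∃ uu : Fin k → ℕ, uu = fun i => d i - D0 i := ⟨_, rfl⟩
      have hdu : ∀ i, d i = D0 i + uu i := fun i => by
        have h2 : D0 i ≤ d i := hle i
        rw [huu]
        show d i = D0 i + (d i - D0 i)
        omega
      rcases Nat.lt_or_ge (∑ i, uu i) 2 with hsmall | hbig
      · rcases Nat.lt_or_ge (∑ i, uu i) 1 with h0 | h1
        · -- ∑ uu = 0, d = D0
          have huu0 : ∀ i, uu i = 0 := by
            intro i
            have h1 : uu i ≤ ∑ i', uu i' := Finset.single_le_sum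
              (fun _ _ => Nat.zero_le _) (Finset.mem_univ i)
            omega
          have hdD : d = D0 := funext fun i => by rw [hdu i, huu0 i, add_zero]
          rw [hdD]
          exact hgens D0 (Or.inl hD0)
        · -- ∑ uu = 1, d = D0 + e l
          have hone : ∑ i, uu i = 1 := le_antisymm (by omega) h1
          have hexl : ∃ l, uu l ≠ 0 := by
            by_contra hno
            push_neg at hno
            rw [Finset.sum_congr rfl fun i _ => hno i] at hone
            simp at hone
          obtain ⟨l, hl⟩ := hexl
          have huel : ∀ i, uu i = e l i := by
            have hrest : ∑ i ∈ Finset.univ.erase l, uu i = 0 := by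
              have := Finset.add_sum_erase Finset.univ uu (Finset.mem_univ l)
              omega
            intro i
            rcases eq_or_ne i l with hil | hil
            · subst hil
              have h2 : uu i + ∑ i' ∈ Finset.univ.erase i, uu i' = 1 := by
                rw [Finset.add_sum_erase Finset.univ uu (Finset.mem_univ i)]
                exact hone
              rw [hel, if_pos rfl]
              omega
            · have h3 : uu i = 0 := Finset.sum_eq_zero_iff.mp hrest i
                (Finset.mem_erase.mpr ⟨hil, Finset.mem_univ i⟩)
              rw [h3, hel, if_neg hil]
          have hdD : d = D0 + e l := funext fun i => by
            rw [Pi.add_apply, hdu i, huel i]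
          rw [hdD]
          exact hgens (D0 + e l) (Or.inr ⟨l, D0, hD0, rfl⟩)
      · -- ∑ uu ≥ 2
        obtain ⟨l, hl⟩ : ∃ l, 0 < uu l := by
          by_contra hno
          push_neg at hno
          have : ∑ i, uu i = 0 := Finset.sum_eq_zero fun i _ => Nat.le_zero.mp (hno i)
          omega
        obtain ⟨u', hu'⟩ : ∃ u' : Fin k → ℕ, u' = fun i => uu i - e l i := ⟨_, rfl⟩
        have hu'i : ∀ i, u' i = uu i - e l i := fun i => by rw [hu']
        obtain ⟨l', hl'⟩ : ∃ l', 0 < u' l' := by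
          by_contra hno
          push_neg at hno
          have hle' : ∀ i, uu i ≤ e l i := by
            intro i
            have h2 := hno i
            rw [hu'i i] at h2
            omega
          have h3 : ∑ i, uu i ≤ ∑ i, e l i := Finset.sum_le_sum fun i _ => hle' i
          rw [sum_e] at h3
          omega
        obtain ⟨c, hc⟩ : ∃ c : Fin k → ℕ, c = fun i => D0 i + (u' i - e l' i) := ⟨_, rfl⟩
        have hci : ∀ i, c i = D0 i + (u' i - e l' i) := fun i => by rw [hc]
        have hAB : ∀ i, e l i + e l' i ≤ uu i := by
          intro i
          by_cases hil : i = l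
          · subst hil
            by_cases hil' : i = l'
            · subst hil'
              have h6 : u' i = uu i - 1 := by rw [hu'i i, hel, if_pos rfl]
              have h7 : 1 ≤ u' i := hl'
              rw [hel, if_pos rfl]
              omega
            · rw [hel, if_pos rfl, hel, if_neg (fun hx => hil' hx)]
              have h2 : 1 ≤ uu i := hl
              omega
          · by_cases hil' : i = l'
            · subst hil'
              have h6 : u' i = uu i - e l i := hu'i i
              rw [hel, if_neg hil] at h6
              have h7 : 1 ≤ u' i := hl'
              rw [hel, if_neg hil, hel, if_pos rfl]
              omega
            · rw [hel, if_neg hil, hel, if_neg hil']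
              omega
        have hceq : d = c + e l' + e l := by
          funext i
          have hABi := hAB i
          have h1 : d i = D0 i + uu i := hdu i
          have h5 : c i = D0 i + (u' i - e l' i) := hci i
          have h4 : u' i = uu i - e l i := hu'i i
          show d i = c i + e l' i + e l i
          omega
        have hcD0 : D0 ≤ c := fun i => by
          rw [hci i]
          exact Nat.le_add_right _ _
        have hs2 : s ≤ NN k n c := le_of_lt (lt_of_lt_of_le hD0.1 (NN_mono hcD0))
        have hcD0' : D0 ≤ c + e l' := le_trans hcD0 (fun i => Nat.le_add_right _ _)
        have hs1 : s ≤ NN k n (c + e l') := le_of_lt (lt_of_lt_of_le hD0.1 (NN_mono hcD0'))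
        have hsums : (∑ i, (c + e l') i) ≤ t ∧ (∑ i, (c + e l) i) ≤ t := by
          have hA : ∑ i, d i = (∑ i, c i) + 1 + 1 := by
            rw [hceq]
            simp only [Pi.add_apply]
            rw [Finset.sum_add_distrib, Finset.sum_add_distrib, sum_e, sum_e]
          have hB : (∑ i, (c + e l') i) = (∑ i, c i) + 1 := by
            simp only [Pi.add_apply]
            rw [Finset.sum_add_distrib, sum_e]
          have hC : (∑ i, (c + e l) i) = (∑ i, c i) + 1 := by
            simp only [Pi.add_apply]
            rw [Finset.sum_add_distrib, sum_e]
          omega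
        have hres := key hgen J l l'
          (ih (c + e l') hsums.1) (ih (c + e l) hsums.2) hs1 hs2
        rw [hceq]
        exact hres

end Aux6
section Aux7

variable {K : Type} [Field K] {k : ℕ} {n : Fin k → ℕ} {s : ℕ}

lemma comp_mem_ideal [Infinite K] {P : Fin s → PointRep K k n}
    {f : MvPolynomial (Var k n) K} (hf : f ∈ idealOfPoints K P) (d : Fin k → ℕ) :
    weightedHomogeneousComponent (wt k n) d f ∈ idealOfPoints K P := by
  classical
  have hcomp_mem : ∀ m : Fin k → ℕ,
      weightedHomogeneousComponent (wt k n) m f ∈ piece K k n m := fun m =>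
    weightedHomogeneousComponent_isWeightedHomogeneous m f
  apply (mem_ideal_iff (hcomp_mem d)).mpr
  intro a
  have hfin : (Function.support fun m => weightedHomogeneousComponent (wt k n) m f).Finite :=
    weightedHomogeneousComponent_finsupp f
  set S : Finset (Fin k → ℕ) := hfin.toFinset with hS
  have hsumf : ∑ m ∈ S, weightedHomogeneousComponent (wt k n) m f = f := by
    rw [← finsum_eq_sum _ hfin]
    exact sum_weightedHomogeneousComponent (wt k n) f
  by_cases hdS : d ∈ S
  · set tt : (Fin k → ℕ) → K :=
      fun m => ep P a (weightedHomogeneousComponent (wt k n) m f) with htt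
    set q : MvPolynomial (Fin k) K :=
      ∑ m ∈ S, C (tt m) * ∏ i, (X i : MvPolynomial (Fin k) K) ^ m i with hq
    have hqeval : ∀ x : Fin k → K, eval x q = 0 := by
      intro x
      rw [hq, map_sum]
      have hterm : ∀ m ∈ S, eval x (C (tt m) * ∏ i, (X i : MvPolynomial (Fin k) K) ^ m i)
          = eval (fun v : Var k n => x v.1 * P a v.1 v.2)
              (weightedHomogeneousComponent (wt k n) m f) := by
        intro m _
        rw [eval_scale (hcomp_mem m), map_mul, eval_C]
        have hXprod : eval x (∏ i, (X i : MvPolynomial (Fin k) K) ^ m i)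
            = ∏ i, x i ^ m i := by
          rw [map_prod]
          exact Finset.prod_congr rfl fun i _ => by rw [map_pow, eval_X]
        rw [hXprod, htt]
        exact mul_comm _ _
      rw [Finset.sum_congr rfl hterm, ← map_sum, hsumf]
      simp only [idealOfPoints, Ideal.mem_iInf, RingHom.mem_ker] at hf
      exact hf a x
    have hq0 : q = 0 := by
      apply MvPolynomial.funext
      intro x
      rw [hqeval x, map_zero]
    have hmon : ∀ m : Fin k → ℕ,
        (C (tt m) * ∏ i, (X i : MvPolynomial (Fin k) K) ^ m i)
          = monomial (Finsupp.equivFunOnFinite.symm m) (tt m) := by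
      intro m
      rw [monomial_eq]
      congr 1
      rw [Finsupp.prod_fintype _ _ (fun i => pow_zero _)]
      exact Finset.prod_congr rfl fun i _ => by
        rfl
    have hcoeff := congrArg (MvPolynomial.coeff (Finsupp.equivFunOnFinite.symm d)) hq0
    rw [hq, MvPolynomial.coeff_zero] at hcoeff
    have hcoeff2 : (∑ m ∈ S, MvPolynomial.coeff (Finsupp.equivFunOnFinite.symm d)
        (monomial (Finsupp.equivFunOnFinite.symm m) (tt m))) = 0 := by
      rw [← MvPolynomial.coeff_sum]
      rw [← Finset.sum_congr rfl fun m _ => hmon m]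
      exact hcoeff
    have hterm2 : ∀ m ∈ S,
        MvPolynomial.coeff (Finsupp.equivFunOnFinite.symm d)
          (monomial (Finsupp.equivFunOnFinite.symm m) (tt m))
        = if m = d then tt m else 0 := by
      intro m _
      rw [MvPolynomial.coeff_monomial]
      congr 1
      simp only [eq_iff_iff]
      constructor
      · intro h
        exact Finsupp.equivFunOnFinite.symm.injective h
      · intro h
        rw [h]
    rw [Finset.sum_congr rfl hterm2, Finset.sum_ite_eq' S d] at hcoeff2
    rw [if_pos hdS] at hcoeff2
    exact hcoeff2
  · have hzero : weightedHomogeneousComponent (wt k n) d f = 0 := by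
      by_contra hne
      exact hdS (hfin.mem_toFinset.mpr hne)
    rw [hzero, map_zero]

end Aux7
theorem generators_in_T (K : Type) [Field K] [IsAlgClosed K] [CharZero K]
    (k : ℕ) (n : Fin k → ℕ) {s : ℕ} (P : Fin s → PointRep K k n)
    (hgen : GenericPosition K P) :
    Ideal.span
      (⋃ i ∈ Dset k n s ∪ ⋃ l : Fin k, (fun d => d + e l) '' Dset k n s,
        (idealPiece K (idealOfPoints K P) i : Set (MvPolynomial (Var k n) K)))
      = idealOfPoints K P := by
  classical
  apply le_antisymm
  · rw [Ideal.span_le]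
    intro x hx
    simp only [Set.mem_iUnion] at hx
    obtain ⟨i, hi, hxi⟩ := hx
    rw [SetLike.mem_coe] at hxi ⊢
    have hmem := (Submodule.mem_inf.mp hxi).1
    rwa [Submodule.restrictScalars_mem] at hmem
  · intro f hf
    have hfin : (Function.support fun m => weightedHomogeneousComponent (wt k n) m f).Finite :=
      weightedHomogeneousComponent_finsupp f
    have hsumf : ∑ m ∈ hfin.toFinset, weightedHomogeneousComponent (wt k n) m f = f := by
      rw [← finsum_eq_sum _ hfin]
      exact sum_weightedHomogeneousComponent (wt k n) f
    rw [← hsumf]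
    apply Ideal.sum_mem
    intro m _
    have hmem : weightedHomogeneousComponent (wt k n) m f
        ∈ idealPiece K (idealOfPoints K P) m :=
      mem_idealPiece_of (comp_mem_ideal hf m)
        (weightedHomogeneousComponent_isWeightedHomogeneous m f)
    refine pieces_le hgen _ ?_ (∑ i, m i) m (le_refl _) hmem
    intro i hi x hx
    apply Ideal.subset_span
    rw [Set.mem_iUnion₂]
    refine ⟨i, ?_, hx⟩
    rcases hi with h | ⟨l, D0, hD0, rfl⟩
    · exact Set.mem_union_left _ h
    · exact Set.mem_union_right _ (Set.mem_iUnion.mpr ⟨l, Set.mem_image_of_mem _ hD0⟩)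

end MultiProjPoints
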